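/- For every integer m ≥ 0 and every x ∈ ℚ_p, x ≠ 0, one has ∫_{‖y‖ < ‖x‖} (log‖x‖ - log‖y‖) · ‖y‖^m dμ(y) = d_{1,m} ‖x‖^{m+1}, where d_{1,m} = (1 - 1/p)(log p) · p^{-(m+1)}/(1 - p^{-(m+1)})^2. In particular there exists A > 0 with d_{1,m} ≤ A p^{-m} for all m ≥ 0. -/

import Mathlib

open MeasureTheory ENNReal

set_option linter.unusedSectionVars false

section Aux

variable {p : ℕ} [Fact p.Prime] [MeasurableSpace ℚ_[p]] [BorelSpace ℚ_[p]]

private lemma pball_meas (r : ℝ) : MeasurableSet {y : ℚ_[p] | ‖y‖ ≤ r} :=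
  (isClosed_le continuous_norm continuous_const).measurableSet

/-- cover of ball of radius p^k by p cosets of ball of radius p^(k-1) -/
private lemma pball_cover (k : ℤ) :
    {y : ℚ_[p] | ‖y‖ ≤ (p : ℝ) ^ k} =
      ⋃ c ∈ Finset.range p,
        {y : ℚ_[p] | ‖y - (c : ℚ_[p]) * (p : ℚ_[p]) ^ (-k)‖ ≤ (p : ℝ) ^ (k - 1)} := by
  have hp1 : (1 : ℝ) < p := by exact_mod_cast (Fact.out : p.Prime).one_lt
  have hp0 : (0 : ℝ) < p := by positivity
  ext y
  simp only [Set.mem_setOf_eq, Set.mem_iUnion, Finset.mem_range]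
  constructor
  · intro hy
    have ht : ‖y * (p : ℚ_[p]) ^ (k : ℤ)‖ ≤ 1 := by
      rw [norm_mul, Padic.norm_p_zpow]
      calc ‖y‖ * (p : ℝ) ^ (-k) ≤ (p : ℝ) ^ k * (p : ℝ) ^ (-k) := by
            apply mul_le_mul_of_nonneg_right hy (zpow_nonneg hp0.le _)
        _ = 1 := by rw [← zpow_add₀ (ne_of_gt hp0)]; simp
    set t : ℤ_[p] := ⟨y * (p : ℚ_[p]) ^ (k : ℤ), ht⟩ with htdef
    refine ⟨t.appr 1, by simpa using t.appr_lt 1, ?_⟩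
    have hspec := PadicInt.appr_spec 1 t
    have hnorm : ‖t - (t.appr 1 : ℤ_[p])‖ ≤ (p : ℝ) ^ (-(1:ℕ) : ℤ) :=
      (PadicInt.norm_le_pow_iff_mem_span_pow _ 1).mpr (by simpa using hspec)
    have hQ : ‖(y * (p : ℚ_[p]) ^ (k : ℤ)) - (t.appr 1 : ℚ_[p])‖ ≤ (p : ℝ)⁻¹ := by
      have : ((t - (t.appr 1 : ℤ_[p]) : ℤ_[p]) : ℚ_[p])
          = (y * (p : ℚ_[p]) ^ (k : ℤ)) - (t.appr 1 : ℚ_[p]) := by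
        push_cast [htdef]
        exact PadicInt.coe_sub _ _
      rw [← this]
      simpa [PadicInt.norm_def] using hnorm
    have key : y - (t.appr 1 : ℚ_[p]) * (p : ℚ_[p]) ^ (-k)
        = ((y * (p : ℚ_[p]) ^ (k : ℤ)) - (t.appr 1 : ℚ_[p])) * (p : ℚ_[p]) ^ (-k) := by
      have hpk : (p : ℚ_[p]) ^ (k : ℤ) ≠ 0 := by
        apply zpow_ne_zero
        exact_mod_cast (Fact.out : p.Prime).ne_zero
      rw [sub_mul, mul_assoc, ← zpow_add₀ (by exact_mod_cast (Fact.out : p.Prime).ne_zero : (p : ℚ_[p]) ≠ 0), add_neg_cancel, zpow_zero, mul_one]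
    rw [key, norm_mul, Padic.norm_p_zpow, neg_neg]
    calc ‖y * (p:ℚ_[p]) ^ (k:ℤ) - (t.appr 1 : ℚ_[p])‖ * (p:ℝ) ^ k
        ≤ (p : ℝ)⁻¹ * (p : ℝ) ^ k :=
          mul_le_mul_of_nonneg_right hQ (zpow_nonneg hp0.le _)
      _ = (p : ℝ) ^ (k - 1) := by
          rw [← zpow_neg_one, ← zpow_add₀ (ne_of_gt hp0)]; ring_nf
  · rintro ⟨c, hc, hyc⟩
    have h1 : ‖(c : ℚ_[p]) * (p : ℚ_[p]) ^ (-k)‖ ≤ (p : ℝ) ^ k := by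
      rw [norm_mul, Padic.norm_p_zpow, neg_neg]
      calc ‖(c : ℚ_[p])‖ * (p : ℝ) ^ k ≤ 1 * (p : ℝ) ^ k := by
            apply mul_le_mul_of_nonneg_right _ (zpow_nonneg hp0.le _)
            exact_mod_cast Padic.norm_int_le_one (c : ℤ)
        _ = (p : ℝ) ^ k := one_mul _
    have h2 : (p : ℝ) ^ (k - 1) ≤ (p : ℝ) ^ k := zpow_le_zpow_right₀ hp1.le (by omega)
    calc ‖y‖ = ‖(y - (c : ℚ_[p]) * (p : ℚ_[p]) ^ (-k)) + (c : ℚ_[p]) * (p : ℚ_[p]) ^ (-k)‖ := by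
          ring_nf
      _ ≤ max ‖y - (c : ℚ_[p]) * (p : ℚ_[p]) ^ (-k)‖ ‖(c : ℚ_[p]) * (p : ℚ_[p]) ^ (-k)‖ :=
          Padic.nonarchimedean _ _
      _ ≤ (p : ℝ) ^ k := max_le (hyc.trans h2) h1


private lemma pball_disj (k : ℤ) :
    Set.PairwiseDisjoint (↑(Finset.range p)) (fun c : ℕ =>
      {y : ℚ_[p] | ‖y - (c : ℚ_[p]) * (p : ℚ_[p]) ^ (-k)‖ ≤ (p : ℝ) ^ (k - 1)}) := by
  have hp1 : (1 : ℝ) < p := by exact_mod_cast (Fact.out : p.Prime).one_lt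
  have hp0 : (0 : ℝ) < p := by positivity
  intro c hc c' hc' hne
  simp only [Finset.coe_range, Set.mem_Iio] at hc hc'
  refine Set.disjoint_left.mpr fun y hy hy' => ?_
  simp only [Set.mem_setOf_eq] at hy hy'
  have hdiff : ‖((c : ℚ_[p]) - (c' : ℚ_[p])) * (p : ℚ_[p]) ^ (-k)‖ ≤ (p : ℝ) ^ (k - 1) := by
    have : ((c : ℚ_[p]) - (c' : ℚ_[p])) * (p : ℚ_[p]) ^ (-k)
        = (y - (c' : ℚ_[p]) * (p : ℚ_[p]) ^ (-k)) - (y - (c : ℚ_[p]) * (p : ℚ_[p]) ^ (-k)) := by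
      ring
    rw [this]
    have h := Padic.nonarchimedean
        (y - (c' : ℚ_[p]) * (p : ℚ_[p]) ^ (-k)) (-(y - (c : ℚ_[p]) * (p : ℚ_[p]) ^ (-k)))
    rw [norm_neg, ← sub_eq_add_neg] at h
    exact h.trans (max_le hy' hy)
  have hnorm1 : ‖((c : ℚ_[p]) - (c' : ℚ_[p]))‖ = 1 := by
    have hcast : ((c : ℚ_[p]) - (c' : ℚ_[p])) = (((c : ℤ) - (c' : ℤ) : ℤ) : ℚ_[p]) := by
      push_cast; ring
    rw [hcast]
    have hle : ‖(((c : ℤ) - (c' : ℤ) : ℤ) : ℚ_[p])‖ ≤ 1 := Padic.norm_int_le_one _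
    have hnd : ¬ ((p : ℤ) ∣ ((c : ℤ) - (c' : ℤ))) := by
      intro hdvd
      have : ((c : ℤ) - (c' : ℤ)) = 0 := by
        refine Int.eq_zero_of_abs_lt_dvd hdvd (abs_sub_lt_iff.2 ⟨?_, ?_⟩) <;> omega
      omega
    have := (Padic.norm_intCast_lt_one_iff (k := ((c : ℤ) - (c' : ℤ)))).not.mpr (by exact_mod_cast hnd)
    push_neg at this
    linarith
  have : ‖((c : ℚ_[p]) - (c' : ℚ_[p])) * (p : ℚ_[p]) ^ (-k)‖ = (p : ℝ) ^ k := by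
    rw [norm_mul, hnorm1, one_mul, Padic.norm_p_zpow, neg_neg]
  rw [this] at hdiff
  have : (p : ℝ) ^ k < (p : ℝ) ^ k := lt_of_le_of_lt hdiff (zpow_lt_zpow_right₀ hp1 (by omega))
  exact lt_irrefl _ this

private lemma pball_measure (μ : Measure ℚ_[p]) [μ.IsAddHaarMeasure]
    (hμ : μ {x : ℚ_[p] | ‖x‖ ≤ 1} = 1) (k : ℤ) :
    μ {y : ℚ_[p] | ‖y‖ ≤ (p : ℝ) ^ k} = (p : ℝ≥0∞) ^ k := by
  have hp0' : (p : ℝ≥0∞) ≠ 0 := by exact_mod_cast (Fact.out : p.Prime).ne_zero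
  have hptop : (p : ℝ≥0∞) ≠ ⊤ := ENNReal.natCast_ne_top p
  -- step relation
  have step : ∀ k : ℤ, μ {y : ℚ_[p] | ‖y‖ ≤ (p : ℝ) ^ k}
      = (p : ℝ≥0∞) * μ {y : ℚ_[p] | ‖y‖ ≤ (p : ℝ) ^ (k - 1)} := by
    intro k
    rw [pball_cover k]
    rw [measure_biUnion_finset (pball_disj k) (fun c _ => by
      have : {y : ℚ_[p] | ‖y - (c : ℚ_[p]) * (p : ℚ_[p]) ^ (-k)‖ ≤ (p : ℝ) ^ (k - 1)}
          = (fun y => y - (c : ℚ_[p]) * (p : ℚ_[p]) ^ (-k)) ⁻¹' {y : ℚ_[p] | ‖y‖ ≤ (p : ℝ) ^ (k - 1)} := rfl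
      rw [this]
      exact (pball_meas _).preimage (measurable_id.sub measurable_const))]
    have heach : ∀ c ∈ Finset.range p,
        μ {y : ℚ_[p] | ‖y - (c : ℚ_[p]) * (p : ℚ_[p]) ^ (-k)‖ ≤ (p : ℝ) ^ (k - 1)}
        = μ {y : ℚ_[p] | ‖y‖ ≤ (p : ℝ) ^ (k - 1)} := by
      intro c _
      have : {y : ℚ_[p] | ‖y - (c : ℚ_[p]) * (p : ℚ_[p]) ^ (-k)‖ ≤ (p : ℝ) ^ (k - 1)}
          = (fun y => (-(c : ℚ_[p]) * (p : ℚ_[p]) ^ (-k)) + y) ⁻¹' {y : ℚ_[p] | ‖y‖ ≤ (p : ℝ) ^ (k - 1)} := by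
        ext y; simp only [Set.mem_preimage, Set.mem_setOf_eq]
        rw [show (-(c : ℚ_[p]) * (p : ℚ_[p]) ^ (-k)) + y = y - (c : ℚ_[p]) * (p : ℚ_[p]) ^ (-k) by ring]
      rw [this, measure_preimage_add]
    rw [Finset.sum_congr rfl heach, Finset.sum_const, Finset.card_range, nsmul_eq_mul]
  -- base case
  have base : μ {y : ℚ_[p] | ‖y‖ ≤ (p : ℝ) ^ (0 : ℤ)} = 1 := by
    simpa using hμ
  induction k using Int.induction_on with
  | zero => simpa using base
  | succ n ih =>
      rw [step (n + 1)]
      simp only [add_sub_cancel_right] at *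
      rw [ih, show ((n:ℤ)+1) = 1 + (n:ℤ) by ring, ENNReal.zpow_add hp0' hptop, zpow_one]
  | pred n ih =>
      have := step (-n)
      rw [ih] at this
      have h2 : μ {y : ℚ_[p] | ‖y‖ ≤ (p : ℝ) ^ ((-n : ℤ) - 1)}
          = (p : ℝ≥0∞)⁻¹ * (p : ℝ≥0∞) ^ (-n : ℤ) := by
        rw [this]
        rw [← mul_assoc, ENNReal.inv_mul_cancel hp0' hptop, one_mul]
      rw [h2, show ((-(n:ℤ)) - 1) = (-1) + (-(n:ℤ)) by ring, ENNReal.zpow_add hp0' hptop]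
      congr 1
      exact (zpow_neg_one _).symm



private lemma ofReal_zpow' {x : ℝ} (hx : 0 < x) (k : ℤ) :
    (ENNReal.ofReal x) ^ k = ENNReal.ofReal (x ^ k) := by
  have h0 : ENNReal.ofReal x ≠ 0 := by simp [ENNReal.ofReal_eq_zero, not_le, hx]
  have ht : ENNReal.ofReal x ≠ ⊤ := ENNReal.ofReal_ne_top
  induction k using Int.induction_on with
  | zero => simp
  | succ n ih =>
      rw [show ((n:ℤ)+1) = (n:ℤ) + 1 by ring, ENNReal.zpow_add h0 ht, ih, zpow_one,
        zpow_add₀ hx.ne' _ 1, zpow_one, ENNReal.ofReal_mul (zpow_nonneg hx.le _)]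
  | pred n ih =>
      rw [show (-(n:ℤ) - 1 : ℤ) = (-(n:ℤ)) + (-1) by ring, ENNReal.zpow_add h0 ht, ih,
        zpow_add₀ hx.ne' _ (-1), ENNReal.ofReal_mul (zpow_nonneg hx.le _)]
      congr 1
      rw [zpow_neg_one, zpow_neg_one, ENNReal.ofReal_inv_of_pos hx]

private lemma psphere_eq (k : ℤ) :
    {y : ℚ_[p] | ‖y‖ = (p : ℝ) ^ k} =
      {y : ℚ_[p] | ‖y‖ ≤ (p : ℝ) ^ k} \ {y : ℚ_[p] | ‖y‖ ≤ (p : ℝ) ^ (k - 1)} := by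
  have hp1 : (1 : ℝ) < p := by exact_mod_cast (Fact.out : p.Prime).one_lt
  ext y
  simp only [Set.mem_setOf_eq, Set.mem_diff, not_le]
  constructor
  · intro h
    exact ⟨le_of_eq h, h ▸ zpow_lt_zpow_right₀ hp1 (by omega)⟩
  · rintro ⟨h1, h2⟩
    have hy0 : y ≠ 0 := by
      intro h
      rw [h, norm_zero] at h2
      exact absurd h2 (not_lt.mpr (zpow_nonneg (by positivity) _))
    rw [Padic.norm_eq_zpow_neg_valuation hy0] at h1 h2 ⊢
    congr 1
    have hv1 : -y.valuation ≤ k := (zpow_le_zpow_iff_right₀ hp1).mp h1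
    have hv2 : k - 1 < -y.valuation := (zpow_lt_zpow_iff_right₀ hp1).mp h2
    omega

private lemma psphere_meas (k : ℤ) : MeasurableSet {y : ℚ_[p] | ‖y‖ = (p : ℝ) ^ k} :=
  (isClosed_eq continuous_norm continuous_const).measurableSet

private lemma psphere_measure (μ : Measure ℚ_[p]) [μ.IsAddHaarMeasure]
    (hμ : μ {x : ℚ_[p] | ‖x‖ ≤ 1} = 1) (k : ℤ) :
    μ {y : ℚ_[p] | ‖y‖ = (p : ℝ) ^ k}
      = ENNReal.ofReal ((p : ℝ) ^ k - (p : ℝ) ^ (k - 1)) := by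
  have hp0 : (0 : ℝ) < p := by exact_mod_cast (Fact.out : p.Prime).pos
  have hp1 : (1 : ℝ) < p := by exact_mod_cast (Fact.out : p.Prime).one_lt
  have hfin : μ {y : ℚ_[p] | ‖y‖ ≤ (p : ℝ) ^ (k - 1)} ≠ ⊤ := by
    rw [pball_measure μ hμ]
    exact (ENNReal.zpow_lt_top (by exact_mod_cast (Fact.out : p.Prime).ne_zero)
      (ENNReal.natCast_ne_top p) _).ne
  have hsub : {y : ℚ_[p] | ‖y‖ ≤ (p : ℝ) ^ (k - 1)} ⊆ {y : ℚ_[p] | ‖y‖ ≤ (p : ℝ) ^ k} :=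
    fun y hy => le_trans hy (zpow_le_zpow_right₀ hp1.le (by omega))
  rw [psphere_eq, measure_diff hsub (pball_meas _).nullMeasurableSet hfin,
    pball_measure μ hμ, pball_measure μ hμ]
  have hcast : (p : ℝ≥0∞) = ENNReal.ofReal (p : ℝ) := by
    simp [ENNReal.ofReal_natCast]
  rw [hcast, ofReal_zpow' hp0, ofReal_zpow' hp0,
    ENNReal.ofReal_sub _ (zpow_nonneg hp0.le _)]

end Aux

private lemma tsum_succ_geometric {q : ℝ} (h0 : 0 < q) (h1 : q < 1) :
    Summable (fun j : ℕ => (((j : ℝ) + 1) * q ^ (j + 1))) ∧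
    ∑' j : ℕ, (((j : ℝ) + 1) * q ^ (j + 1)) = q / (1 - q) ^ 2 := by
  have hq : ‖q‖ < 1 := by rw [Real.norm_eq_abs, abs_of_nonneg h0.le]; exact h1
  have hs : Summable fun n : ℕ => (n : ℝ) * q ^ n := by
    simpa [pow_one] using summable_pow_mul_geometric_of_norm_lt_one 1 hq
  have hshift : (fun j : ℕ => (((j : ℝ) + 1) * q ^ (j + 1)))
      = fun j : ℕ => (((j + 1 : ℕ) : ℝ) * q ^ (j + 1)) := by
    funext j; push_cast; ring
  constructor
  · rw [hshift]
    exact hs.comp_injective Nat.succ_injective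
  · have h2 := hs.tsum_eq_zero_add
    rw [Nat.cast_zero, zero_mul, zero_add] at h2
    rw [hshift, ← h2]
    exact tsum_coe_mul_geometric_of_norm_lt_one hq


theorem log_kernel_moment_integral
    (p : ℕ) [Fact p.Prime]
    [MeasurableSpace ℚ_[p]] [BorelSpace ℚ_[p]]
    (μ : Measure ℚ_[p]) [μ.IsAddHaarMeasure]
    (hμ : μ {x : ℚ_[p] | ‖x‖ ≤ 1} = 1) :
    (∀ m : ℕ, ∀ x : ℚ_[p], x ≠ 0 →
      ∫ y in {y : ℚ_[p] | ‖y‖ < ‖x‖},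
          (Real.log ‖x‖ - Real.log ‖y‖) * ‖y‖ ^ m ∂μ
        = (1 - 1 / (p : ℝ)) * Real.log p *
            ((p : ℝ) ^ (m + 1))⁻¹ / (1 - ((p : ℝ) ^ (m + 1))⁻¹) ^ 2 * ‖x‖ ^ (m + 1)) ∧
    ∃ A : ℝ, 0 < A ∧ ∀ m : ℕ,
      (1 - 1 / (p : ℝ)) * Real.log p *
          ((p : ℝ) ^ (m + 1))⁻¹ / (1 - ((p : ℝ) ^ (m + 1))⁻¹) ^ 2
        ≤ A * ((p : ℝ) ^ m)⁻¹ := by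
  have hp1 : (1 : ℝ) < p := by exact_mod_cast (Fact.out : p.Prime).one_lt
  have hppos : (0 : ℝ) < p := lt_trans one_pos hp1
  have hP0 : (p : ℝ) ≠ 0 := ne_of_gt hppos
  have hL : 0 < Real.log p := Real.log_pos hp1
  constructor
  · intro m x hx
    set P : ℝ := (p : ℝ) with hPdef
    set q : ℝ := ((p : ℝ) ^ (m + 1))⁻¹ with hqdef
    have hq0 : 0 < q := by positivity
    have hq1 : q < 1 := by
      rw [hqdef]
      rw [inv_lt_one₀ (by positivity)]
      exact one_lt_pow₀ hp1 (Nat.succ_ne_zero m)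
    have hqP : q = P ^ (-((m : ℤ) + 1)) := by
      rw [hqdef, zpow_neg, show ((m : ℤ) + 1) = ((m + 1 : ℕ) : ℤ) by push_cast; ring,
        zpow_natCast]
    set n : ℤ := -x.valuation with hn
    have hxn : ‖x‖ = P ^ n := Padic.norm_eq_zpow_neg_valuation hx
    set F : ℕ → Set ℚ_[p] := fun j => {y : ℚ_[p] | ‖y‖ = P ^ (n - 1 - j)} with hF
    set f : ℚ_[p] → ℝ := fun y => (Real.log ‖x‖ - Real.log ‖y‖) * ‖y‖ ^ m with hfdef
    have hmeasf : Measurable f :=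
      (measurable_const.sub (Real.measurable_log.comp measurable_norm)).mul
        (measurable_norm.pow_const m)
    have hD : MeasurableSet {y : ℚ_[p] | ‖y‖ < ‖x‖} :=
      (isOpen_lt continuous_norm continuous_const).measurableSet
    have h0ae : ∀ᵐ y ∂μ, y ≠ 0 := by
      rw [Filter.eventually_iff, mem_ae_iff]
      have : {y : ℚ_[p] | y ≠ 0}ᶜ = {(0 : ℚ_[p])} := by
        ext y; simp
      rw [this]
      exact measure_singleton 0
    have hnn : 0 ≤ᵐ[μ.restrict {y : ℚ_[p] | ‖y‖ < ‖x‖}] f := by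
      refine (ae_restrict_iff' hD).mpr ?_
      filter_upwards [h0ae] with y hy0 hyD
      have hy0' : (0:ℝ) < ‖y‖ := norm_pos_iff.mpr hy0
      have hlog : Real.log ‖y‖ ≤ Real.log ‖x‖ := Real.log_le_log hy0' (le_of_lt hyD)
      exact mul_nonneg (sub_nonneg.mpr hlog) (pow_nonneg (norm_nonneg y) m)
    rw [show (fun y => (Real.log ‖x‖ - Real.log ‖y‖) * ‖y‖ ^ m) = f from rfl] at *
    rw [integral_eq_lintegral_of_nonneg_ae hnn hmeasf.aestronglyMeasurable]
    have hdm : ({y : ℚ_[p] | ‖y‖ < ‖x‖} \ {0} : Set ℚ_[p]) =ᵐ[μ] {y : ℚ_[p] | ‖y‖ < ‖x‖} := by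
      apply diff_ae_eq_self.mpr
      exact le_antisymm (le_trans (measure_mono Set.inter_subset_right)
        (le_of_eq (measure_singleton 0))) zero_le
    rw [← setLIntegral_congr hdm]
    have hunion : {y : ℚ_[p] | ‖y‖ < ‖x‖} \ {0} = ⋃ j, F j := by
      ext y
      simp only [Set.mem_diff, Set.mem_setOf_eq, Set.mem_singleton_iff, Set.mem_iUnion, hF]
      constructor
      · rintro ⟨hlt, hy0⟩
        have hyv : ‖y‖ = P ^ (-y.valuation) := Padic.norm_eq_zpow_neg_valuation hy0
        rw [hxn, hyv] at hlt
        have hv : -y.valuation < n := (zpow_lt_zpow_iff_right₀ hp1).mp hlt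
        refine ⟨(n - 1 + y.valuation).toNat, ?_⟩
        rw [hyv]
        congr 1
        omega
      · rintro ⟨j, hj⟩
        refine ⟨?_, ?_⟩
        · rw [hxn, hj]
          exact zpow_lt_zpow_right₀ hp1 (by omega)
        · intro h0
          rw [h0, norm_zero] at hj
          exact absurd hj.symm (ne_of_gt (zpow_pos hppos _))
    have hdisj : Pairwise (Function.onFun Disjoint F) := by
      intro i j hij
      refine Set.disjoint_left.mpr fun y hyi hyj => hij ?_
      simp only [hF, Set.mem_setOf_eq] at hyi hyj
      have h := zpow_right_injective₀ hppos (ne_of_gt hp1) (hyi.symm.trans hyj)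
      omega
    rw [hunion, lintegral_iUnion (fun j => psphere_meas _) hdisj]
    set L : ℝ := Real.log P with hLdef
    set g : ℕ → ℝ := fun j =>
      ((((j:ℝ)) + 1) * L * (P ^ (n - 1 - (j:ℤ))) ^ m) *
        (P ^ (n - 1 - (j:ℤ)) - P ^ ((n - 1 - (j:ℤ)) - 1)) with hgdef
    have hgnn : ∀ j, 0 ≤ g j := by
      intro j
      apply mul_nonneg
      · exact mul_nonneg (mul_nonneg (by positivity) hL.le)
          (pow_nonneg (zpow_nonneg hppos.le _) m)
      · exact sub_nonneg.mpr (zpow_le_zpow_right₀ hp1.le (by omega))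
    have hterm : ∀ j : ℕ, ∫⁻ y in F j, ENNReal.ofReal (f y) ∂μ = ENNReal.ofReal (g j) := by
      intro j
      have hcongr : ∀ y ∈ F j, ENNReal.ofReal (f y)
          = ENNReal.ofReal ((((j:ℝ)) + 1) * L * (P ^ (n - 1 - (j:ℤ))) ^ m) := by
        intro y hy
        simp only [hF, Set.mem_setOf_eq] at hy
        congr 1
        show (Real.log ‖x‖ - Real.log ‖y‖) * ‖y‖ ^ m
            = (((j:ℝ)) + 1) * L * (P ^ (n - 1 - (j:ℤ))) ^ m
        rw [hy, hxn, Real.log_zpow, Real.log_zpow, hLdef]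
        push_cast
        ring
      rw [setLIntegral_congr_fun (psphere_meas _) hcongr,
        setLIntegral_const, psphere_measure μ hμ,
        ← ENNReal.ofReal_mul (mul_nonneg (mul_nonneg (by positivity) hL.le)
          (pow_nonneg (zpow_nonneg hppos.le _) m))]
    have hterm' : ∀ j : ℕ, ∫⁻ y in {y : ℚ_[p] | ‖y‖ = (p : ℝ) ^ (n - 1 - (j:ℤ))}, ENNReal.ofReal (f y) ∂μ
        = ENNReal.ofReal (g j) := hterm
    simp only [hterm']
    have hsum1 := tsum_succ_geometric hq0 hq1
    set C : ℝ := L * (1 - 1/P) * P ^ (n * ((m:ℤ) + 1)) with hCdef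
    have hgC : ∀ j : ℕ, g j = C * ((((j:ℝ)) + 1) * q ^ (j + 1)) := by
      intro j
      set k : ℤ := n - 1 - (j:ℤ) with hk
      have e1 : (P ^ k) ^ m = P ^ (k * (m:ℤ)) := by
        rw [zpow_mul, zpow_natCast]
      have h3 : P ^ (k * (m:ℤ) + k - 1) = P ^ (k * (m:ℤ) + k) * P⁻¹ := by
        rw [← zpow_neg_one P, ← zpow_add₀ hP0]
        try congr 1
        try ring
      have h4 : P ^ (k * (m:ℤ)) * P ^ k = P ^ (k * (m:ℤ) + k) := (zpow_add₀ hP0 _ _).symm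
      have h5 : P ^ (k * (m:ℤ)) * P ^ (k - 1) = P ^ (k * (m:ℤ) + k - 1) := by
        rw [← zpow_add₀ hP0]; congr 1; ring
      have heq : q ^ (j + 1) = P ^ ((-((m:ℤ)+1)) * ((j:ℤ)+1)) := by
        rw [hqP, ← zpow_natCast (P ^ (-((m:ℤ)+1))) (j+1), ← zpow_mul]
        try congr 1
        try push_cast
        try ring
      have h6 : P ^ (n * ((m:ℤ)+1)) * P ^ ((-((m:ℤ)+1)) * ((j:ℤ)+1)) = P ^ (k * (m:ℤ) + k) := by
        rw [← zpow_add₀ hP0]; congr 1; rw [hk]; ring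
      rw [hgdef]
      simp only
      rw [e1, hCdef, heq]
      calc ((((j:ℝ)) + 1) * L * P ^ (k * (m:ℤ))) * (P ^ k - P ^ (k - 1))
          = (((j:ℝ)) + 1) * L * (P ^ (k*(m:ℤ)) * P ^ k - P ^ (k*(m:ℤ)) * P ^ (k-1)) := by ring
        _ = (((j:ℝ)) + 1) * L * (P ^ (k*(m:ℤ)+k) - P ^ (k*(m:ℤ)+k) * P⁻¹) := by
            rw [h4, h5, h3]
        _ = L * (1 - 1/P) * (P ^ (n*((m:ℤ)+1)) * P ^ ((-((m:ℤ)+1)) * ((j:ℤ)+1)))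
              * (((j:ℝ)) + 1) := by
            rw [h6]
            field_simp
        _ = L * (1 - 1/P) * P ^ (n*((m:ℤ)+1))
              * ((((j:ℝ)) + 1) * P ^ ((-((m:ℤ)+1)) * ((j:ℤ)+1))) := by ring
    have hgsummable : Summable g := by
      apply (summable_congr hgC).mpr
      exact (hsum1.1).mul_left C
    rw [← ENNReal.ofReal_tsum_of_nonneg hgnn hgsummable,
      ENNReal.toReal_ofReal (tsum_nonneg hgnn), tsum_congr hgC, tsum_mul_left, hsum1.2]
    rw [hxn]
    have hxpow : (P ^ n) ^ (m+1) = P ^ (n * ((m:ℤ)+1)) := by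
      rw [← zpow_natCast (P ^ n) (m+1), ← zpow_mul]
      try congr 1
      try push_cast
      try ring
    rw [hxpow, hCdef]
    ring
  · refine ⟨4 * Real.log p, by positivity, ?_⟩
    intro m
    set P : ℝ := (p : ℝ) with hPdef
    set q : ℝ := ((p : ℝ) ^ (m + 1))⁻¹ with hqdef
    have hq0 : 0 < q := by positivity
    have hp2 : (2:ℝ) ≤ P := by rw [hPdef]; exact_mod_cast (Fact.out : p.Prime).two_le
    have hpow2 : (2:ℝ) ≤ P ^ (m+1) := le_trans hp2 (le_self_pow₀ hp1.le (Nat.succ_ne_zero m))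
    have hq_half : q ≤ 1/2 := by
      have h2 : ((p:ℝ) ^ (m+1))⁻¹ ≤ (2:ℝ)⁻¹ := inv_anti₀ (by norm_num) hpow2
      rw [hqdef]
      linarith
    have hkey : q / (1-q)^2 ≤ 4 * q := by
      rw [div_le_iff₀ (by nlinarith)]
      nlinarith [sq_nonneg (1 - 2*q), hq0.le, hq_half]
    have hq_le : q ≤ (P ^ m)⁻¹ := by
      rw [hqdef]
      exact inv_anti₀ (by positivity) (pow_le_pow_right₀ hp1.le (Nat.le_succ m))
    have h1P : 0 < 1/P := by positivity
    calc (1 - 1/P) * Real.log P * q / (1-q)^2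
        = ((1 - 1/P) * Real.log P) * (q / (1-q)^2) := by ring
      _ ≤ (1 * Real.log P) * (4 * (P ^ m)⁻¹) := by
          apply mul_le_mul
          · apply mul_le_mul_of_nonneg_right _ hL.le
            linarith
          · exact hkey.trans (by linarith)
          · positivity
          · positivity
      _ = 4 * Real.log P * (P ^ m)⁻¹ := by ring
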